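/- arXiv:2501.07854 — 2 statements merged into one kernel-verified Lean document; each statement's English description precedes it below -/
import Mathlib

section
/- Let n ≥ 2 be an integer and ω = (n+1)·ω_{n+1}, where ω_{n+1} is the Lebesgue volume of the unit ball in ℝ^{n+1}. For 0 ≤ j ≤ n define g_j(ρ) = C(n,j)·ω·(cos ρ)^j·(sin ρ)^{n−j}, and define f_{−1}(ρ) = ω·∫_0^ρ (sin t)^n dt, f_0(ρ) = g_0(ρ), f_1(ρ) = g_1(ρ) + n·f_{−1}(ρ), and f_j(ρ) = g_j(ρ) + ((n−j+1)/(j−1))·f_{j−2}(ρ) for 2 ≤ j ≤ n. Then for every integer 1 ≤ k ≤ n, the function f_{k−1} is differentiable on (0, π/2) with f_{k−1}′(ρ) = k·g_k(ρ) > 0 for every ρ ∈ (0, π/2); in particular f_{k−1} is strictly increasing on (0, π/2). -/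
open Real MeasureTheory

/-- `ballVol m` is the Lebesgue volume of the closed unit ball in `ℝ^m`. -/
noncomputable def ballVol (m : ℕ) : ℝ :=
  (volume (Metric.closedBall (0 : EuclideanSpace ℝ (Fin m)) 1)).toReal

/-- `g n ω j ρ = C(n,j)·ω·(cos ρ)^j·(sin ρ)^{n−j}`, the curvature integral
`∫_{∂B_ρ} σ_j` over the geodesic sphere of radius `ρ` in `S^{n+1}`. -/
noncomputable def gsph (n : ℕ) (ω : ℝ) (j : ℕ) (ρ : ℝ) : ℝ :=
  (n.choose j : ℝ) * ω * (Real.cos ρ) ^ j * (Real.sin ρ) ^ (n - j)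

/-- `Fq n ω k = f_{k−1}`, the quermassintegral `A_{k−1}(B_ρ)` of the geodesic ball:
`f_{−1}(ρ) = ω ∫_0^ρ sin^n`, `f_0 = g_0`, `f_1 = g_1 + n f_{−1}`,
`f_j = g_j + ((n−j+1)/(j−1)) f_{j−2}` for `2 ≤ j ≤ n`. -/
noncomputable def Fq (n : ℕ) (ω : ℝ) : ℕ → ℝ → ℝ
  | 0, ρ => ω * ∫ t in (0 : ℝ)..ρ, (Real.sin t) ^ n
  | 1, ρ => gsph n ω 0 ρ
  | 2, ρ => gsph n ω 1 ρ + n * Fq n ω 0 ρ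
  | (j + 3), ρ => gsph n ω (j + 2) ρ +
      (((n : ℝ) - ((j : ℝ) + 2) + 1) / (((j : ℝ) + 2) - 1)) * Fq n ω (j + 1) ρ

lemma Fq_zero_hasDerivAt (n : ℕ) (ω : ℝ) (ρ : ℝ) :
    HasDerivAt (Fq n ω 0) (ω * Real.sin ρ ^ n) ρ := by
  have hcont : Continuous fun t : ℝ => Real.sin t ^ n := Real.continuous_sin.pow n
  have h : HasDerivAt (fun u => ∫ t in (0:ℝ)..u, Real.sin t ^ n) (Real.sin ρ ^ n) ρ :=
    intervalIntegral.integral_hasDerivAt_right (hcont.intervalIntegrable _ _)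
      hcont.aestronglyMeasurable.stronglyMeasurableAtFilter hcont.continuousAt
  have h2 := h.const_mul ω
  have : Fq n ω 0 = fun u => ω * ∫ t in (0:ℝ)..u, Real.sin t ^ n := by
    funext u; simp [Fq]
  rw [this]
  exact h2

lemma key_hasDerivAt (n : ℕ) (ω : ℝ) (hn : 2 ≤ n) :
    ∀ k, 1 ≤ k → k ≤ n → ∀ ρ : ℝ,
      HasDerivAt (Fq n ω k) ((k : ℝ) * gsph n ω k ρ) ρ := by
  intro k
  induction k using Nat.strong_induction_on with
  | _ k ih =>
  match k with
  | 0 => intro h; omega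
  | 1 =>
    intro _ _ ρ
    have hF : Fq n ω 1 = fun u => ((n.choose 0 : ℝ) * ω) * Real.sin u ^ n := by
      funext u; simp [Fq, gsph]
    rw [hF]
    have h := (((Real.hasDerivAt_sin ρ).pow n).const_mul ((n.choose 0 : ℝ) * ω))
    refine h.congr_deriv ?_
    simp only [gsph, Nat.choose_one_right, Nat.choose_zero_right, Nat.cast_one]
    ring
  | 2 =>
    intro _ _ ρ
    obtain ⟨r, rfl⟩ : ∃ r, n = r + 2 := ⟨n - 2, by omega⟩
    have hF : Fq (r+2) ω 2 = fun u =>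
        (((r+2).choose 1 : ℝ) * ω) * (Real.cos u * Real.sin u ^ (r+1))
          + (r+2 : ℝ) * Fq (r+2) ω 0 u := by
      funext u
      show gsph (r+2) ω 1 u + ((r+2 : ℕ) : ℝ) * Fq (r+2) ω 0 u = _
      simp [gsph]
      ring
    rw [hF]
    have h1 : HasDerivAt (fun u => Real.cos u * Real.sin u ^ (r+1))
        ((-Real.sin ρ) * Real.sin ρ ^ (r+1)
          + Real.cos ρ * (((r:ℝ)+1) * Real.sin ρ ^ r * Real.cos ρ)) ρ := by
      have := (Real.hasDerivAt_cos ρ).mul ((Real.hasDerivAt_sin ρ).pow (r+1))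
      refine this.congr_deriv ?_
      simp only [Pi.pow_apply]
      push_cast
      ring
    have h2 := (h1.const_mul (((r+2).choose 1 : ℝ) * ω)).add
      ((Fq_zero_hasDerivAt (r+2) ω ρ).const_mul ((r+2 : ℝ)))
    refine h2.congr_deriv ?_
    symm
    have hch1 : ((r+2).choose 1 : ℝ) = (r : ℝ) + 2 := by
      rw [Nat.choose_one_right]; push_cast; ring
    have hch2 : ((r+2).choose 2 : ℝ) * 2 = ((r:ℝ)+2) * ((r:ℝ)+1) := by
      have := Nat.choose_succ_right_eq (r+2) 1
      have h' : (r+2) - 1 = r + 1 := by omega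
      rw [h', Nat.choose_one_right] at this
      have := congrArg (Nat.cast : ℕ → ℝ) this
      push_cast at this
      linarith
    simp only [gsph]
    have hexp : (r+2) - 2 = r := by omega
    rw [hexp]
    push_cast
    linear_combination (ω * Real.cos ρ ^ 2 * Real.sin ρ ^ r) * hch2 +
      (ω * Real.sin ρ ^ (r + 2) - ((r:ℝ) + 1) * ω * Real.cos ρ ^ 2 * Real.sin ρ ^ r) * hch1
  | (j+3) =>
    intro _ hkn ρ
    obtain ⟨s, rfl⟩ : ∃ s, n = j + s + 3 := ⟨n - (j+3), by omega⟩
    set N := j + s + 3 with hN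
    have hF : Fq N ω (j+3) = fun u => gsph N ω (j+2) u
        + (((s:ℝ)+2) / ((j:ℝ)+1)) * Fq N ω (j+1) u := by
      funext u
      show gsph N ω (j+2) u + (((N : ℝ) - ((j : ℝ) + 2) + 1) / (((j : ℝ) + 2) - 1))
          * Fq N ω (j+1) u = _
      have : ((N : ℝ) - ((j : ℝ) + 2) + 1) = (s:ℝ)+2 := by
        simp only [hN]; push_cast; ring
      rw [this, show ((j:ℝ) + 2 - 1) = (j:ℝ) + 1 by ring]
    rw [hF]
    have hihder := ih (j+1) (by omega) (by omega) (by omega) ρ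
    have hexp2 : N - (j+2) = s + 1 := by omega
    have hexp1 : N - (j+1) = s + 2 := by omega
    have hexp3 : N - (j+3) = s := by omega
    have hg : HasDerivAt (gsph N ω (j+2))
        ((N.choose (j+2) : ℝ) * ω *
          ((((j:ℝ)+2) * Real.cos ρ ^ (j+1) * (-Real.sin ρ)) * Real.sin ρ ^ (s+1)
            + Real.cos ρ ^ (j+2) * (((s:ℝ)+1) * Real.sin ρ ^ s * Real.cos ρ))) ρ := by
      have hG : gsph N ω (j+2) = fun u =>
          ((N.choose (j+2) : ℝ) * ω) * (Real.cos u ^ (j+2) * Real.sin u ^ (s+1)) := by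
        funext u; simp only [gsph, hexp2]; ring
      rw [hG]
      have := (((Real.hasDerivAt_cos ρ).pow (j+2)).mul
        ((Real.hasDerivAt_sin ρ).pow (s+1))).const_mul ((N.choose (j+2) : ℝ) * ω)
      refine this.congr_deriv ?_
      simp only [Pi.pow_apply]
      push_cast
      ring
    have hj1 : ((j:ℝ)+1) ≠ 0 := by positivity
    have hihder' : HasDerivAt (Fq N ω (j+1)) (((j:ℝ)+1) * gsph N ω (j+1) ρ) ρ := by
      convert hihder using 1; push_cast; ring
    have htot := hg.add (hihder'.const_mul (((s:ℝ)+2) / ((j:ℝ)+1)))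
    refine htot.congr_deriv ?_
    symm
    rw [show ((s:ℝ)+2) / ((j:ℝ)+1) * (((j:ℝ)+1) * gsph N ω (j+1) ρ)
        = ((s:ℝ)+2) * gsph N ω (j+1) ρ by field_simp]
    -- binomial identities
    have hA : ((j:ℝ)+2) * (N.choose (j+2) : ℝ) = ((s:ℝ)+2) * (N.choose (j+1) : ℝ) := by
      have := Nat.choose_succ_right_eq N (j+1)
      rw [hexp1] at this
      have := congrArg (Nat.cast : ℕ → ℝ) this
      push_cast at this
      linarith
    have hB : ((j:ℝ)+3) * (N.choose (j+3) : ℝ) = ((s:ℝ)+1) * (N.choose (j+2) : ℝ) := by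
      have := Nat.choose_succ_right_eq N (j+2)
      rw [hexp2] at this
      have := congrArg (Nat.cast : ℕ → ℝ) this
      push_cast at this
      linarith
    simp only [gsph, hexp1, hexp3]
    push_cast
    linear_combination (ω * Real.cos ρ ^ (j+3) * Real.sin ρ ^ s) * hB +
      (ω * Real.cos ρ ^ (j+1) * Real.sin ρ ^ (s+2)) * hA

/-- For `1 ≤ k ≤ n`, the quermassintegral profile `f_{k−1}` is differentiable on
`(0, π/2)` with `f_{k−1}'(ρ) = k g_k(ρ) > 0`; in particular `f_{k−1}` is strictly
increasing on `(0, π/2)`. -/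
theorem deriv_Fq (n k : ℕ) (hn : 2 ≤ n) (hk1 : 1 ≤ k) (hk2 : k ≤ n) :
    (∀ ρ ∈ Set.Ioo 0 (π / 2),
      HasDerivAt (Fq n (((n : ℝ) + 1) * ballVol (n + 1)) k)
          ((k : ℝ) * gsph n (((n : ℝ) + 1) * ballVol (n + 1)) k ρ) ρ ∧
        0 < (k : ℝ) * gsph n (((n : ℝ) + 1) * ballVol (n + 1)) k ρ) ∧
      StrictMonoOn (Fq n (((n : ℝ) + 1) * ballVol (n + 1)) k) (Set.Ioo 0 (π / 2)) := by
  set ω := ((n : ℝ) + 1) * ballVol (n + 1) with hω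
  have hball : 0 < ballVol (n + 1) := by
    unfold ballVol
    refine ENNReal.toReal_pos ?_ ?_
    · exact (Metric.measure_closedBall_pos volume _ one_pos).ne'
    · exact (MeasureTheory.measure_closedBall_lt_top).ne
  have hωpos : 0 < ω := by
    have : (0:ℝ) < (n:ℝ) + 1 := by positivity
    exact mul_pos this hball
  have hpos : ∀ ρ ∈ Set.Ioo 0 (π / 2), 0 < (k : ℝ) * gsph n ω k ρ := by
    intro ρ hρ
    obtain ⟨h0, h1⟩ := hρ
    have hc : 0 < Real.cos ρ :=
      Real.cos_pos_of_mem_Ioo ⟨by linarith [Real.pi_pos], h1⟩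
    have hs : 0 < Real.sin ρ :=
      Real.sin_pos_of_pos_of_lt_pi h0 (by linarith [Real.pi_pos])
    have hch : 0 < (n.choose k : ℝ) := by
      exact_mod_cast Nat.choose_pos hk2
    have hk : 0 < (k:ℝ) := by exact_mod_cast hk1
    unfold gsph
    positivity
  have hder := key_hasDerivAt n ω hn k hk1 hk2
  constructor
  · exact fun ρ hρ => ⟨hder ρ, hpos ρ hρ⟩
  · apply strictMonoOn_of_deriv_pos (convex_Ioo _ _)
    · exact fun ρ _ => (hder ρ).continuousAt.continuousWithinAt
    · intro ρ hρ
      rw [interior_Ioo] at hρ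
      rw [(hder ρ).deriv]
      exact hpos ρ hρ
end

section
/- Let n ≥ 2 and 1 ≤ k ≤ n−1 be integers, and let ω = (n+1)·ω_{n+1}, where ω_{n+1} is the Lebesgue volume of the unit ball in ℝ^{n+1}. For 0 ≤ j ≤ n define g_j(ρ) = C(n,j)·ω·(cos ρ)^j·(sin ρ)^{n−j}, and define f_{−1}(ρ) = ω·∫_0^ρ (sin t)^n dt, f_0(ρ) = g_0(ρ), f_1(ρ) = g_1(ρ) + n·f_{−1}(ρ), and f_j(ρ) = g_j(ρ) + ((n−j+1)/(j−1))·f_{j−2}(ρ) for 2 ≤ j ≤ n. Set s_{k−1} = sup_{ρ ∈ (0,π/2)} f_{k−1}(ρ). Then there exists a differentiable function η_k : (0, s_{k−1}) → ℝ such that η_k(f_{k−1}(ρ)) = g_k(ρ)² for every ρ ∈ (0, π/2), and its derivative satisfies, for every ρ ∈ (0, π/2), η_k′(f_{k−1}(ρ)) = [ (2k(n−k)/(n−k+1))·g_k(ρ)² − 2(n−k+1)·g_{k−1}(ρ)² ] / ( k·g_{k−1}(ρ) ). -/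
open Real MeasureTheory

lemma gsph_hasDerivAt (n j : ℕ) (ω ρ : ℝ) (hj1 : 1 ≤ j) (hj2 : j + 1 ≤ n) :
    HasDerivAt (gsph n ω j)
      (-((n - j + 1 : ℕ) : ℝ) * gsph n ω (j - 1) ρ + ((j + 1 : ℕ) : ℝ) * gsph n ω (j + 1) ρ) ρ := by
  have hc : HasDerivAt (fun ρ => Real.cos ρ ^ j)
      ((j : ℝ) * Real.cos ρ ^ (j - 1) * (-Real.sin ρ)) ρ := (Real.hasDerivAt_cos ρ).pow j
  have hs : HasDerivAt (fun ρ => Real.sin ρ ^ (n - j))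
      (((n - j : ℕ) : ℝ) * Real.sin ρ ^ (n - j - 1) * Real.cos ρ) ρ := (Real.hasDerivAt_sin ρ).pow _
  have h : HasDerivAt (fun ρ => ((n.choose j : ℝ) * ω) * (Real.cos ρ ^ j * Real.sin ρ ^ (n - j))) _ ρ :=
    ((hc.mul hs).const_mul ((n.choose j : ℝ) * ω))
  have he : (fun ρ => ((n.choose j : ℝ) * ω) * (Real.cos ρ ^ j * Real.sin ρ ^ (n - j)))
      = gsph n ω j := by
    funext x; simp [gsph]; ring
  rw [he] at h
  convert h using 1
  have e1 : (n.choose j) * j = n.choose (j - 1) * (n - j + 1) := by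
    have := Nat.choose_succ_right_eq n (j - 1)
    rw [Nat.sub_add_cancel hj1] at this
    rw [this]; congr 1; omega
  have e2 : (n.choose j) * (n - j) = n.choose (j + 1) * (j + 1) := by
    rw [Nat.choose_succ_right_eq n j]
  have e1' := congrArg (Nat.cast : ℕ → ℝ) e1
  have e2' := congrArg (Nat.cast : ℕ → ℝ) e2
  push_cast [Nat.sub_add_cancel (by omega : j ≤ n)] at e1' e2'
  have p1 : Real.sin ρ ^ (n - (j - 1)) = Real.sin ρ ^ (n - j - 1) * Real.sin ρ * Real.sin ρ := by
    have : n - (j - 1) = (n - j - 1) + 2 := by omega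
    rw [this, pow_add]; ring
  have p2 : Real.sin ρ ^ (n - j) = Real.sin ρ ^ (n - j - 1) * Real.sin ρ := by
    rw [← pow_succ]; congr 1; omega
  have p3 : Real.cos ρ ^ (j + 1) = Real.cos ρ ^ (j - 1) * Real.cos ρ * Real.cos ρ := by
    have : j + 1 = (j - 1) + 2 := by omega
    rw [this, pow_add]; ring
  have p4 : Real.cos ρ ^ j = Real.cos ρ ^ (j - 1) * Real.cos ρ := by
    rw [← pow_succ]; congr 1; omega
  have p5 : (n : ℕ) - (j + 1) = n - j - 1 := by omega
  have c1 : ((n - j + 1 : ℕ) : ℝ) = (n : ℝ) - j + 1 := by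
    push_cast [Nat.cast_sub (by omega : j ≤ n)]; ring
  have c2 : ((n - j : ℕ) : ℝ) = (n : ℝ) - j := by
    push_cast [Nat.cast_sub (by omega : j ≤ n)]; ring
  rw [c2] at e1' e2'
  simp only [gsph, p1, p2, p3, p4, p5, c1, c2]
  push_cast
  linear_combination (ω * Real.cos ρ ^ (j - 1) * Real.sin ρ ^ (n - j - 1) * Real.sin ρ * Real.sin ρ) * e1' - (ω * Real.cos ρ ^ (j - 1) * Real.sin ρ ^ (n - j - 1) * Real.cos ρ * Real.cos ρ) * e2'

lemma Fq0_hasDerivAt (n : ℕ) (ω ρ : ℝ) :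
    HasDerivAt (Fq n ω 0) (ω * Real.sin ρ ^ n) ρ := by
  have hcont : Continuous fun t : ℝ => Real.sin t ^ n := Real.continuous_sin.pow n
  have h : HasDerivAt (fun u : ℝ => ∫ t in (0:ℝ)..u, Real.sin t ^ n) (Real.sin ρ ^ n) ρ :=
    intervalIntegral.integral_hasDerivAt_right (hcont.intervalIntegrable _ _)
      (hcont.stronglyMeasurableAtFilter _ _) hcont.continuousAt
  have := h.const_mul ω
  have he : Fq n ω 0 = fun y => ω * ∫ t in (0:ℝ)..y, Real.sin t ^ n := by funext x; simp [Fq]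
  rw [he]; exact this

lemma gsph0_hasDerivAt (n : ℕ) (hn : 1 ≤ n) (ω ρ : ℝ) :
    HasDerivAt (gsph n ω 0) (gsph n ω 1 ρ) ρ := by
  have h : HasDerivAt (fun ρ => ω * Real.sin ρ ^ n) _ ρ := ((Real.hasDerivAt_sin ρ).pow n).const_mul ω
  have he : (fun ρ => ω * Real.sin ρ ^ n) = gsph n ω 0 := by
    funext x; simp [gsph]
  rw [he] at h
  convert h using 1
  simp only [gsph, Nat.choose_one_right]
  have : Real.sin ρ ^ (n - 1) = Real.sin ρ ^ (n - 1) := rfl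
  push_cast
  ring

lemma Fq_hasDerivAt (n : ℕ) (ω : ℝ) (hn : 2 ≤ n) :
    ∀ j, 1 ≤ j → j ≤ n → ∀ ρ, HasDerivAt (Fq n ω j) ((j : ℝ) * gsph n ω j ρ) ρ := by
  intro j
  induction j using Nat.strong_induction_on with
  | _ j ih =>
    match j with
    | 0 => intro h; exact absurd h (by omega)
    | 1 =>
      intro _ _ ρ
      have he : Fq n ω 1 = gsph n ω 0 := by funext x; simp [Fq]
      rw [he]
      simpa using (gsph0_hasDerivAt n (by omega) ω ρ)
    | 2 =>
      intro _ _ ρ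
      have h1 := gsph_hasDerivAt n 1 ω ρ le_rfl (by omega)
      have h0 := (Fq0_hasDerivAt n ω ρ).const_mul (n : ℝ)
      have h := h1.add h0
      simp only [Pi.add_def] at h
      have he : (fun ρ => gsph n ω 1 ρ + (n : ℝ) * Fq n ω 0 ρ) = Fq n ω 2 := by
        funext x; simp [Fq]
      rw [he] at h
      refine h.congr_deriv ?_
      have c1 : ((n - 1 + 1 : ℕ) : ℝ) = (n : ℝ) := by
        have : n - 1 + 1 = n := by omega
        rw [this]
      simp [gsph, c1]
    | (m + 3) =>
      intro _ hle ρ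
      have hmn : m + 3 ≤ n := hle
      have h1 := gsph_hasDerivAt n (m + 2) ω ρ (by omega) (by omega)
      have h2 := (ih (m + 1) (by omega) (by omega) (by omega) ρ).const_mul
        (((n : ℝ) - ((m : ℝ) + 2) + 1) / (((m : ℝ) + 2) - 1))
      have h := h1.add h2
      simp only [Pi.add_def] at h
      have he : (fun ρ => gsph n ω (m + 2) ρ +
          (((n : ℝ) - ((m : ℝ) + 2) + 1) / (((m : ℝ) + 2) - 1)) * Fq n ω (m + 1) ρ)
          = Fq n ω (m + 3) := by
        funext x; simp [Fq]
      rw [he] at h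
      refine h.congr_deriv ?_
      have c1 : ((n - (m + 2) + 1 : ℕ) : ℝ) = (n : ℝ) - (m : ℝ) - 1 := by
        have h2 : ((n - (m+2) : ℕ) : ℝ) = (n : ℝ) - (m + 2 : ℕ) := Nat.cast_sub (by omega)
        push_cast [h2]; ring
      have hsimp : (m + 2 + 1 : ℕ) = m + 3 := rfl
      rw [hsimp, c1]
      have hm1 : ((m : ℝ) + 2) - 1 ≠ 0 := by
        have : ((m : ℝ) + 2) - 1 = (m : ℝ) + 1 := by ring
        rw [this]; positivity
      field_simp
      push_cast
      ring

lemma gsph_continuous (n : ℕ) (ω : ℝ) (j : ℕ) : Continuous (gsph n ω j) := by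
  unfold gsph; fun_prop

lemma gsph_pos (n : ℕ) (ω : ℝ) (j : ℕ) (hω : 0 < ω) (hj : j ≤ n) {ρ : ℝ}
    (hρ : ρ ∈ Set.Ioo 0 (π / 2)) : 0 < gsph n ω j ρ := by
  have hc : 0 < Real.cos ρ := Real.cos_pos_of_mem_Ioo
    ⟨by linarith [hρ.1, pi_div_two_pos], hρ.2⟩
  have hs : 0 < Real.sin ρ := Real.sin_pos_of_pos_of_lt_pi hρ.1
    (by linarith [hρ.2, pi_pos])
  have hch : 0 < (n.choose j : ℝ) := by exact_mod_cast Nat.choose_pos hj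
  unfold gsph; positivity

lemma gsph_zero (n : ℕ) (ω : ℝ) (j : ℕ) (hj : j < n) : gsph n ω j 0 = 0 := by
  unfold gsph
  rw [Real.sin_zero, zero_pow (by omega : n - j ≠ 0)]
  ring

lemma Fq_zero (n : ℕ) (ω : ℝ) (hn : 2 ≤ n) : ∀ j ≤ n, Fq n ω j 0 = 0 := by
  intro j
  induction j using Nat.strong_induction_on with
  | _ j ih =>
    match j with
    | 0 => intro _; simp [Fq]
    | 1 => intro _; simp [Fq, gsph_zero n ω 0 (by omega)]
    | 2 => intro _; simp [Fq, gsph_zero n ω 1 (by omega)]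
    | (m + 3) =>
      intro h
      simp [Fq, gsph_zero n ω (m + 2) (by omega), ih (m + 1) (by omega) (by omega)]

lemma gsph_mul_identity (n k : ℕ) (ω ρ : ℝ) (hk1 : 1 ≤ k) (hk2 : k + 1 ≤ n) :
    ((n : ℝ) - k + 1) * ((k : ℝ) + 1) * (gsph n ω (k + 1) ρ * gsph n ω (k - 1) ρ)
      = (k : ℝ) * ((n : ℝ) - k) * (gsph n ω k ρ) ^ 2 := by
  have e1 : (n.choose k) * k = n.choose (k - 1) * (n - k + 1) := by
    have := Nat.choose_succ_right_eq n (k - 1)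
    rw [Nat.sub_add_cancel hk1] at this
    rw [this]; congr 1; omega
  have e2 : (n.choose k) * (n - k) = n.choose (k + 1) * (k + 1) := by
    rw [Nat.choose_succ_right_eq n k]
  have e3 : n.choose (k - 1) * (n - k + 1) * (n.choose (k + 1) * (k + 1))
      = n.choose k * k * (n.choose k * (n - k)) := by rw [← e1, ← e2]
  have e3' := congrArg (Nat.cast : ℕ → ℝ) e3
  push_cast [Nat.cast_sub (by omega : k ≤ n)] at e3'
  have p1 : Real.cos ρ ^ (k + 1) = Real.cos ρ ^ (k - 1) * Real.cos ρ * Real.cos ρ := by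
    have : k + 1 = (k - 1) + 2 := by omega
    rw [this, pow_add]; ring
  have p2 : Real.cos ρ ^ k = Real.cos ρ ^ (k - 1) * Real.cos ρ := by
    rw [← pow_succ]; congr 1; omega
  have p3 : Real.sin ρ ^ (n - (k - 1)) = Real.sin ρ ^ (n - k - 1) * Real.sin ρ * Real.sin ρ := by
    have : n - (k - 1) = (n - k - 1) + 2 := by omega
    rw [this, pow_add]; ring
  have p4 : Real.sin ρ ^ (n - k) = Real.sin ρ ^ (n - k - 1) * Real.sin ρ := by
    rw [← pow_succ]; congr 1; omega
  have p5 : n - (k + 1) = n - k - 1 := by omega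
  simp only [gsph, p1, p2, p3, p4, p5]
  linear_combination (ω ^ 2 * Real.cos ρ ^ (k - 1) * Real.cos ρ ^ (k - 1) * Real.cos ρ *
    Real.cos ρ * Real.sin ρ ^ (n - k - 1) * Real.sin ρ ^ (n - k - 1) * Real.sin ρ *
    Real.sin ρ) * e3'

theorem eta_general (n k : ℕ) (ω : ℝ) (hω : 0 < ω) (hn : 2 ≤ n) (hk1 : 1 ≤ k)
    (hk2 : k ≤ n - 1) :
    ∃ η : ℝ → ℝ,
      (∀ s ∈ Set.Ioo 0 (sSup (Fq n ω k '' Set.Ioo 0 (π / 2))), DifferentiableAt ℝ η s) ∧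
      ∀ ρ ∈ Set.Ioo 0 (π / 2),
        η (Fq n ω k ρ) = (gsph n ω k ρ) ^ 2 ∧
        deriv η (Fq n ω k ρ) =
          ((2 * (k : ℝ) * ((n : ℝ) - k) / ((n : ℝ) - k + 1)) * (gsph n ω k ρ) ^ 2 -
            2 * ((n : ℝ) - k + 1) * (gsph n ω (k - 1) ρ) ^ 2) /
          ((k : ℝ) * gsph n ω (k - 1) ρ) := by
  have hkn : k + 1 ≤ n := by omega
  set F := Fq n ω k with hFdef
  set G := gsph n ω k with hGdef
  have hF' : ∀ ρ, HasDerivAt F ((k : ℝ) * G ρ) ρ :=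
    fun ρ => Fq_hasDerivAt n ω hn k hk1 (by omega) ρ
  have hderiv : deriv F = fun ρ => (k : ℝ) * G ρ := funext fun ρ => (hF' ρ).deriv
  have hC1 : ContDiff ℝ 1 F := by
    rw [contDiff_one_iff_deriv]
    exact ⟨fun ρ => (hF' ρ).differentiableAt,
      by rw [hderiv]; exact continuous_const.mul (gsph_continuous n ω k)⟩
  have hstrict : ∀ ρ, HasStrictDerivAt F ((k : ℝ) * G ρ) ρ := by
    intro ρ
    have h := (hC1.contDiffAt (x := ρ)).hasStrictDerivAt one_ne_zero
    rwa [(hF' ρ).deriv] at h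
  have hGpos : ∀ {ρ}, ρ ∈ Set.Ioo 0 (π / 2) → 0 < G ρ :=
    fun hρ => gsph_pos n ω k hω (by omega) hρ
  have hne : ∀ {ρ}, ρ ∈ Set.Ioo 0 (π / 2) → (k : ℝ) * G ρ ≠ 0 := by
    intro ρ hρ
    have := hGpos hρ
    have hk0 : (0:ℝ) < k := by exact_mod_cast hk1
    positivity
  -- strict monotonicity
  have hmono : StrictMonoOn F (Set.Icc 0 (π / 2)) := by
    apply strictMonoOn_of_deriv_pos (convex_Icc _ _) hC1.continuous.continuousOn
    intro x hx
    rw [interior_Icc] at hx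
    rw [hderiv]
    have := hGpos hx
    have hk0 : (0:ℝ) < k := by exact_mod_cast hk1
    positivity
  have hF0 : F 0 = 0 := Fq_zero n ω hn k (by omega)
  have hhalf : (0:ℝ) < π / 2 := by positivity
  set M := F (π / 2) with hMdef
  have hM : 0 < M := by
    rw [← hF0]
    exact hmono (Set.left_mem_Icc.2 hhalf.le) (Set.right_mem_Icc.2 hhalf.le) hhalf
  have himg : F '' Set.Ioo 0 (π / 2) = Set.Ioo 0 M := by
    apply Set.Subset.antisymm
    · rintro y ⟨x, hx, rfl⟩
      constructor
      · rw [← hF0]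
        exact hmono (Set.left_mem_Icc.2 hhalf.le) ⟨hx.1.le, hx.2.le⟩ hx.1
      · exact hmono ⟨hx.1.le, hx.2.le⟩ (Set.right_mem_Icc.2 hhalf.le) hx.2
    · have h := intermediate_value_Ioo hhalf.le hC1.continuous.continuousOn
        (a := 0) (b := π / 2)
      rwa [hF0] at h
  have hsup : sSup (F '' Set.Ioo 0 (π / 2)) = M := by rw [himg]; exact csSup_Ioo hM
  have hinj : Set.InjOn F (Set.Ioo 0 (π / 2)) :=
    (hmono.injOn).mono Set.Ioo_subset_Icc_self
  set Finv := Function.invFunOn F (Set.Ioo 0 (π / 2)) with hFinvdef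
  have hleft : ∀ x ∈ Set.Ioo 0 (π / 2), Finv (F x) = x := fun x hx =>
    hinj.leftInvOn_invFunOn hx
  set η : ℝ → ℝ := fun s => (gsph n ω k (Finv s)) ^ 2 with hηdef
  -- derivative of η at F ρ
  have hkey : ∀ ρ ∈ Set.Ioo 0 (π / 2), HasDerivAt η
      (2 * G ρ ^ 1 *
        ((-((n - k + 1 : ℕ) : ℝ) * gsph n ω (k - 1) ρ + ((k + 1 : ℕ) : ℝ) * gsph n ω (k + 1) ρ)
          * ((k : ℝ) * G ρ)⁻¹)) (F ρ) := by
    intro ρ hρ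
    have hev : ∀ᶠ x in nhds ρ, Finv (F x) = x :=
      Filter.eventually_of_mem (isOpen_Ioo.mem_nhds hρ) hleft
    have hinv' : HasStrictDerivAt Finv (((k : ℝ) * G ρ)⁻¹) (F ρ) :=
      (hstrict ρ).to_local_left_inverse (hne hρ) hev
    have hG : HasDerivAt (gsph n ω k)
        (-((n - k + 1 : ℕ) : ℝ) * gsph n ω (k - 1) ρ + ((k + 1 : ℕ) : ℝ) * gsph n ω (k + 1) ρ)
        (Finv (F ρ)) := by
      rw [hleft ρ hρ]
      exact gsph_hasDerivAt n k ω ρ hk1 hkn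
    have hcomp := (hG.comp (F ρ) hinv'.hasDerivAt).pow 2
    simp only [Function.comp_apply, hleft ρ hρ] at hcomp
    exact hcomp
  refine ⟨η, ?_, ?_⟩
  · intro s hs
    rw [hsup] at hs
    rw [← himg] at hs
    obtain ⟨ρ, hρ, rfl⟩ := hs
    exact (hkey ρ hρ).differentiableAt
  · intro ρ hρ
    constructor
    · show (gsph n ω k (Finv (F ρ))) ^ 2 = _
      rw [hleft ρ hρ]
    · rw [(hkey ρ hρ).deriv]
      have hid := gsph_mul_identity n k ω ρ hk1 hkn
      have hGk := hGpos hρ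
      have hGkm : 0 < gsph n ω (k - 1) ρ := gsph_pos n ω (k - 1) hω (by omega) hρ
      have hk0 : (0:ℝ) < k := by exact_mod_cast hk1
      have hnk : (0:ℝ) < (n : ℝ) - k + 1 := by
        have h : (k:ℝ) + 1 ≤ (n:ℝ) := by exact_mod_cast hkn
        linarith
      have c1 : ((n - k + 1 : ℕ) : ℝ) = (n : ℝ) - k + 1 := by
        push_cast [Nat.cast_sub (by omega : k ≤ n)]; ring
      rw [c1]
      push_cast
      field_simp
      rw [← hGdef] at hid
      linear_combination hid

/-- Existence of the profile function `η_k` on `(0, s_{k−1})`,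
`s_{k−1} = sup_{ρ ∈ (0,π/2)} f_{k−1}(ρ)`, with `η_k(f_{k−1}(ρ)) = g_k(ρ)²` and
`η_k'(f_{k−1}(ρ)) = [(2k(n−k)/(n−k+1)) g_k(ρ)² − 2(n−k+1) g_{k−1}(ρ)²] / (k g_{k−1}(ρ))`. -/
theorem eta_k_exists (n k : ℕ) (hn : 2 ≤ n) (hk1 : 1 ≤ k) (hk2 : k ≤ n - 1) :
    ∃ η : ℝ → ℝ,
      (∀ s ∈ Set.Ioo 0
          (sSup (Fq n (((n : ℝ) + 1) * ballVol (n + 1)) k '' Set.Ioo 0 (π / 2))),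
        DifferentiableAt ℝ η s) ∧
      ∀ ρ ∈ Set.Ioo 0 (π / 2),
        η (Fq n (((n : ℝ) + 1) * ballVol (n + 1)) k ρ) =
            (gsph n (((n : ℝ) + 1) * ballVol (n + 1)) k ρ) ^ 2 ∧
        deriv η (Fq n (((n : ℝ) + 1) * ballVol (n + 1)) k ρ) =
          ((2 * (k : ℝ) * ((n : ℝ) - k) / ((n : ℝ) - k + 1)) *
              (gsph n (((n : ℝ) + 1) * ballVol (n + 1)) k ρ) ^ 2 -
            2 * ((n : ℝ) - k + 1) *
              (gsph n (((n : ℝ) + 1) * ballVol (n + 1)) (k - 1) ρ) ^ 2) /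
          ((k : ℝ) * gsph n (((n : ℝ) + 1) * ballVol (n + 1)) (k - 1) ρ) := by
  have hω : 0 < ((n : ℝ) + 1) * ballVol (n + 1) := by
    have h1 : (0:ℝ) < (n:ℝ) + 1 := by positivity
    have h2 : 0 < ballVol (n + 1) := by
      unfold ballVol
      apply ENNReal.toReal_pos
      · exact (Metric.measure_closedBall_pos volume _ one_pos).ne'
      · exact ((isCompact_closedBall _ _).measure_lt_top).ne
    positivity
  exact eta_general n k _ hω hn hk1 hk2
end
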